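/- For any monotone hungry valuation function v on [0,1] and any integer n ≥ 1, there exists a unique tuple of cuts 0 = x₀ ≤ x₁ ≤ ⋯ ≤ xₙ = 1 such that all n pieces have equal value, i.e., v(x_{j−1}, x_j) = v(x_{k−1}, x_k) for all j, k ∈ {1,…,n} (the equipartition of the cake into n equal parts according to v). -/

import Mathlib

open Set

/-- A valuation function on the cake `[0,1]`. -/
def IsValuation (v : ℝ → ℝ → ℝ) : Prop :=
  ContinuousOn (fun p : ℝ × ℝ => v p.1 p.2) (Icc 0 1 ×ˢ Icc 0 1) ∧
  (∀ a ∈ Icc (0:ℝ) 1, ∀ b ∈ Icc (0:ℝ) 1, v a b ∈ Icc (0:ℝ) 1) ∧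
  (∀ a ∈ Icc (0:ℝ) 1, ∀ b ∈ Icc (0:ℝ) 1, b ≤ a → v a b = 0)

/-- Monotonicity of a valuation. -/
def MonotoneVal (v : ℝ → ℝ → ℝ) : Prop :=
  ∀ a' a b b' : ℝ, 0 ≤ a' → a' ≤ a → a ≤ b → b ≤ b' → b' ≤ 1 → v a b ≤ v a' b'

/-- Hungriness: monotone, and strictly monotone under strict inclusion of intervals. -/
def HungryVal (v : ℝ → ℝ → ℝ) : Prop :=
  MonotoneVal v ∧
  ∀ a' a b b' : ℝ, 0 ≤ a' → a' ≤ a → a ≤ b → b ≤ b' → b' ≤ 1 →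
    (a, b) ≠ (a', b') → v a b < v a' b'


section Equip

variable {v : ℝ → ℝ → ℝ}

/-- basic facts -/
lemma val_self (hval : IsValuation v) {a : ℝ} (ha : a ∈ Icc (0:ℝ) 1) : v a a = 0 :=
  hval.2.2 a ha a ha le_rfl

lemma val_mem (hval : IsValuation v) {a b : ℝ} (ha : a ∈ Icc (0:ℝ) 1) (hb : b ∈ Icc (0:ℝ) 1) :
    v a b ∈ Icc (0:ℝ) 1 := hval.2.1 a ha b hb

lemma strict_right (hh : HungryVal v) {a b b' : ℝ} (ha : 0 ≤ a) (hab : a ≤ b) (hbb : b < b')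
    (hb' : b' ≤ 1) : v a b < v a b' := by
  refine hh.2 a a b b' ha le_rfl hab hbb.le hb' ?_
  simpa [Prod.ext_iff] using hbb.ne

/-- injectivity in second arg -/
lemma right_inj (hh : HungryVal v) {a b b' : ℝ} (ha : 0 ≤ a) (hab : a ≤ b) (hab' : a ≤ b')
    (hb : b ≤ 1) (hb' : b' ≤ 1) (h : v a b = v a b') : b = b' := by
  rcases lt_trichotomy b b' with hlt | he | hlt
  · exact absurd h (strict_right hh ha hab hlt hb').ne
  · exact he
  · exact absurd h.symm (strict_right hh ha hab' hlt hb).ne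

lemma contOn_right (hval : IsValuation v) {a : ℝ} (ha : a ∈ Icc (0:ℝ) 1) :
    ContinuousOn (v a) (Icc 0 1) := by
  have : ContinuousOn (fun b : ℝ => (a, b)) (Icc 0 1) := by fun_prop
  exact hval.1.comp this (fun b hb => ⟨ha, hb⟩)

/-- the "next cut" function -/
noncomputable def Ncut (v : ℝ → ℝ → ℝ) (a t : ℝ) : ℝ :=
  sSup {b | b ∈ Icc a 1 ∧ v a b ≤ t}

variable (hval : IsValuation v) (hh : HungryVal v)

section Ncut

variable {a t : ℝ} (ha : a ∈ Icc (0:ℝ) 1) (ht : 0 ≤ t)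

include hval ha ht

lemma Ncut_set_closed : IsClosed {b | b ∈ Icc a 1 ∧ v a b ≤ t} := by
  have hcl : IsClosed (Icc (0:ℝ) 1 ∩ v a ⁻¹' Iic t) :=
    (contOn_right hval ha).preimage_isClosed_of_isClosed isClosed_Icc isClosed_Iic
  have h1 : {b | b ∈ Icc a 1 ∧ v a b ≤ t} = Icc a 1 ∩ (Icc (0:ℝ) 1 ∩ v a ⁻¹' Iic t) := by
    ext b
    simp only [mem_setOf_eq, mem_inter_iff, mem_preimage, mem_Iic, mem_Icc]
    constructor
    · rintro ⟨hb, hv⟩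
      exact ⟨hb, ⟨le_trans ha.1 hb.1, hb.2⟩, hv⟩
    · rintro ⟨hb, _, hv⟩
      exact ⟨hb, hv⟩
  rw [h1]
  exact isClosed_Icc.inter hcl

lemma Ncut_mem : Ncut v a t ∈ {b | b ∈ Icc a 1 ∧ v a b ≤ t} := by
  refine (Ncut_set_closed hval ha ht).csSup_mem ⟨a, ⟨le_rfl, ha.2⟩, ?_⟩ ⟨1, fun b hb => hb.1.2⟩
  rw [val_self hval ha]; exact ht

lemma Ncut_mem_Icc : Ncut v a t ∈ Icc a 1 := (Ncut_mem hval ha ht).1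

lemma Ncut_le : v a (Ncut v a t) ≤ t := (Ncut_mem hval ha ht).2

include hh in
lemma Ncut_spec : v a (Ncut v a t) = min t (v a 1) := by
  obtain ⟨⟨hab, hb1⟩, hvt⟩ := Ncut_mem hval ha ht
  set b := Ncut v a t with hbdef
  have hb01 : b ∈ Icc (0:ℝ) 1 := ⟨le_trans ha.1 hab, hb1⟩
  have hmono : v a b ≤ v a 1 := hh.1 a a b 1 ha.1 le_rfl hab hb1 le_rfl
  refine le_antisymm (le_min hvt hmono) ?_
  by_contra hlt
  push_neg at hlt
  have hblt1 : b < 1 := by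
    rcases lt_or_eq_of_le hb1 with h | h
    · exact h
    · rw [h] at hlt
      exact absurd (min_le_right t (v a 1)) (not_le.mpr hlt)
  have hcw : ContinuousWithinAt (v a) (Icc 0 1) b := (contOn_right hval ha) b hb01
  have hev : ∀ᶠ x in nhdsWithin b (Icc 0 1), v a x < min t (v a 1) :=
    hcw (Iio_mem_nhds hlt)
  have hsub : Ioc b 1 ⊆ Icc (0:ℝ) 1 := fun x hx => ⟨le_trans hb01.1 hx.1.le, hx.2⟩
  have hev2 : ∀ᶠ x in nhdsWithin b (Ioc b 1), v a x < min t (v a 1) :=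
    (hev.filter_mono (nhdsWithin_mono b hsub))
  have hne : (nhdsWithin b (Ioc b 1)).NeBot := left_nhdsWithin_Ioc_neBot hblt1
  obtain ⟨x, hx⟩ := (hev2.and (eventually_mem_nhdsWithin)).exists
  have hxS : x ∈ {c | c ∈ Icc a 1 ∧ v a c ≤ t} :=
    ⟨⟨le_trans hab hx.2.1.le, hx.2.2⟩, le_of_lt (lt_of_lt_of_le hx.1 (min_le_left _ _))⟩
  have : x ≤ b := le_csSup ⟨1, fun c hc => hc.1.2⟩ hxS
  exact absurd this (not_le.mpr hx.2.1)

lemma Ncut_eq_one (h1 : v a 1 ≤ t) : Ncut v a t = 1 := by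
  have : (1:ℝ) ∈ {b | b ∈ Icc a 1 ∧ v a b ≤ t} := ⟨⟨ha.2, le_rfl⟩, h1⟩
  exact le_antisymm (Ncut_mem_Icc hval ha ht).2
    (le_csSup ⟨1, fun b hb => hb.1.2⟩ this)

include hh in
lemma Ncut_zero : Ncut v a 0 = a := by
  obtain ⟨⟨hab, hb1⟩, hvt⟩ := Ncut_mem hval ha le_rfl
  have h0 : v a a = 0 := val_self hval ha
  have hge : v a a ≤ v a (Ncut v a 0) := hh.1 a a a (Ncut v a 0) ha.1 le_rfl le_rfl hab hb1
  have : v a (Ncut v a 0) = v a a := le_antisymm (by rw [h0]; exact hvt) hge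
  exact right_inj hh ha.1 hab le_rfl hb1 ha.2 this

end Ncut

lemma contOn_left (hval : IsValuation v) {b : ℝ} (hb : b ∈ Icc (0:ℝ) 1) :
    ContinuousOn (fun a => v a b) (Icc 0 1) := by
  have h2 : ContinuousOn (fun a : ℝ => ((a, b) : ℝ × ℝ)) (Icc 0 1) := by fun_prop
  exact hval.1.comp h2 (fun a haa => ⟨haa, hb⟩)

include hval hh in
lemma Ncut_continuousOn :
    ContinuousOn (fun p : ℝ × ℝ => Ncut v p.1 p.2) (Icc 0 1 ×ˢ Ici 0) := by
  rintro ⟨a₀, t₀⟩ hp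
  rw [Set.mem_prod] at hp
  obtain ⟨ha₀, ht₀⟩ := hp
  have ht₀' : (0:ℝ) ≤ t₀ := ht₀
  rw [Metric.continuousWithinAt_iff]
  intro ε hε
  set b₀ := Ncut v a₀ t₀ with hb₀def
  obtain ⟨⟨hab₀, hb₀1⟩, hvb₀⟩ := Ncut_mem hval ha₀ ht₀'
  have hb₀01 : b₀ ∈ Icc (0:ℝ) 1 := ⟨le_trans ha₀.1 hab₀, hb₀1⟩
  have hspec := Ncut_spec hval hh ha₀ ht₀'
  -- upper bound
  have hupper : ∃ δ > 0, ∀ a t : ℝ, a ∈ Icc (0:ℝ) 1 → 0 ≤ t →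
      |a - a₀| < δ → |t - t₀| < δ → Ncut v a t < b₀ + ε := by
    by_cases hcase : b₀ + ε / 2 ≤ 1
    · set b₁ := b₀ + ε / 2 with hb₁def
      have hb₀b₁ : b₀ < b₁ := by rw [hb₁def]; linarith
      have hb₁01 : b₁ ∈ Icc (0:ℝ) 1 := ⟨le_trans hb₀01.1 hb₀b₁.le, hcase⟩
      have hb₀lt1 : b₀ < 1 := lt_of_lt_of_le hb₀b₁ hcase
      have hvb₀t₀ : v a₀ b₀ = t₀ := by
        rcases min_cases t₀ (v a₀ 1) with ⟨h1, _⟩ | ⟨h1, _⟩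
        · rw [hspec, h1]
        · exfalso
          exact hb₀lt1.ne
            (right_inj hh ha₀.1 hab₀ ha₀.2 hb₀1 le_rfl (by rw [hspec, h1]))
      have hgt : t₀ < v a₀ b₁ := by
        rw [← hvb₀t₀]
        exact strict_right hh ha₀.1 hab₀ hb₀b₁ hb₁01.2
      set c := (v a₀ b₁ + t₀) / 2 with hcdef
      have hc1 : t₀ < c := by rw [hcdef]; linarith
      have hc2 : c < v a₀ b₁ := by rw [hcdef]; linarith
      have hcont : ContinuousWithinAt (fun a => v a b₁) (Icc 0 1) a₀ :=
        contOn_left hval hb₁01 a₀ ha₀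
      rw [Metric.continuousWithinAt_iff] at hcont
      obtain ⟨δ, hδ, hδp⟩ := hcont (v a₀ b₁ - c) (by linarith)
      refine ⟨min δ (min (ε/2) (c - t₀)), lt_min hδ (lt_min (half_pos hε) (by linarith)), ?_⟩
      intro a t haI htI hda hdt
      have hda1 : |a - a₀| < δ := lt_of_lt_of_le hda (min_le_left _ _)
      have hda2 : |a - a₀| < ε/2 :=
        lt_of_lt_of_le hda (le_trans (min_le_right _ _) (min_le_left _ _))
      have hdt2 : |t - t₀| < c - t₀ :=
        lt_of_lt_of_le hdt (le_trans (min_le_right _ _) (min_le_right _ _))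
      have hvab₁ : c < v a b₁ := by
        have := hδp haI (by rwa [Real.dist_eq])
        rw [Real.dist_eq] at this
        have := abs_lt.mp this
        linarith [this.1]
      have htc : t < c := by have := abs_lt.mp hdt2; linarith [this.2]
      have hab₁ : a ≤ b₁ := by
        have := abs_lt.mp hda2
        rw [hb₁def]; linarith [this.2]
      obtain ⟨⟨hab, hb1⟩, hvt⟩ := Ncut_mem hval haI htI
      by_contra hcon
      push_neg at hcon
      have hb₁le : b₁ ≤ Ncut v a t := le_trans (by rw [hb₁def]; linarith) hcon
      have : v a b₁ ≤ v a (Ncut v a t) :=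
        hh.1 a a b₁ (Ncut v a t) haI.1 le_rfl hab₁ hb₁le hb1
      linarith
    · push_neg at hcase
      refine ⟨1, one_pos, ?_⟩
      intro a t haI htI _ _
      have := (Ncut_mem_Icc hval haI htI).2
      linarith
  -- lower bound
  have hlower : ∃ δ > 0, ∀ a t : ℝ, a ∈ Icc (0:ℝ) 1 → 0 ≤ t →
      |a - a₀| < δ → |t - t₀| < δ → b₀ - ε < Ncut v a t := by
    by_cases hcase : a₀ + ε / 2 ≤ b₀
    · set b₂ := b₀ - ε / 2 with hb₂def
      have ha₀b₂ : a₀ ≤ b₂ := by rw [hb₂def]; linarith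
      have hb₂b₀ : b₂ < b₀ := by rw [hb₂def]; linarith
      have hb₂01 : b₂ ∈ Icc (0:ℝ) 1 := ⟨le_trans ha₀.1 ha₀b₂, le_trans hb₂b₀.le hb₀1⟩
      have hv2 : v a₀ b₂ < t₀ := by
        have h1 : v a₀ b₂ < v a₀ b₀ := strict_right hh ha₀.1 ha₀b₂ hb₂b₀ hb₀1
        linarith
      set c := (v a₀ b₂ + t₀) / 2 with hcdef
      have hc1 : v a₀ b₂ < c := by rw [hcdef]; linarith
      have hc2 : c < t₀ := by rw [hcdef]; linarith
      have hcont : ContinuousWithinAt (fun a => v a b₂) (Icc 0 1) a₀ :=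
        contOn_left hval hb₂01 a₀ ha₀
      rw [Metric.continuousWithinAt_iff] at hcont
      obtain ⟨δ, hδ, hδp⟩ := hcont (c - v a₀ b₂) (by linarith)
      refine ⟨min δ (t₀ - c), lt_min hδ (by linarith), ?_⟩
      intro a t haI htI hda hdt
      have hda1 : |a - a₀| < δ := lt_of_lt_of_le hda (min_le_left _ _)
      have hdt2 : |t - t₀| < t₀ - c := lt_of_lt_of_le hdt (min_le_right _ _)
      have hvab₂ : v a b₂ < c := by
        have := hδp haI (by rwa [Real.dist_eq])
        rw [Real.dist_eq] at this
        have := abs_lt.mp this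
        linarith [this.2]
      have htc : c < t := by have := abs_lt.mp hdt2; linarith [this.1]
      by_cases hab₂ : a ≤ b₂
      · have hmem : b₂ ∈ {b | b ∈ Icc a 1 ∧ v a b ≤ t} := ⟨⟨hab₂, hb₂01.2⟩, by linarith⟩
        have hle := le_csSup (⟨1, fun x hx => hx.1.2⟩ : BddAbove {b | b ∈ Icc a 1 ∧ v a b ≤ t}) hmem
        have : b₀ - ε < b₂ := by rw [hb₂def]; linarith
        exact lt_of_lt_of_le this hle
      · push_neg at hab₂
        have := (Ncut_mem_Icc hval haI htI).1
        have : b₀ - ε < a := by rw [hb₂def] at hab₂; linarith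
        linarith [(Ncut_mem_Icc hval haI htI).1]
    · push_neg at hcase
      refine ⟨ε/2, half_pos hε, ?_⟩
      intro a t haI htI hda _
      have h1 := (Ncut_mem_Icc hval haI htI).1
      have := abs_lt.mp hda
      linarith [this.1]
  obtain ⟨δ₁, hδ₁, h₁⟩ := hupper
  obtain ⟨δ₂, hδ₂, h₂⟩ := hlower
  refine ⟨min δ₁ δ₂, lt_min hδ₁ hδ₂, ?_⟩
  rintro ⟨a, t⟩ hq hdq
  rw [Set.mem_prod] at hq
  have hd1 : dist a a₀ ≤ dist ((a,t) : ℝ × ℝ) ((a₀,t₀) : ℝ × ℝ) := by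
    rw [Prod.dist_eq]; exact le_max_left _ _
  have hd2 : dist t t₀ ≤ dist ((a,t) : ℝ × ℝ) ((a₀,t₀) : ℝ × ℝ) := by
    rw [Prod.dist_eq]; exact le_max_right _ _
  have hda1 : |a - a₀| < δ₁ := by
    rw [← Real.dist_eq]; exact lt_of_le_of_lt hd1 (lt_of_lt_of_le hdq (min_le_left _ _))
  have hda2 : |a - a₀| < δ₂ := by
    rw [← Real.dist_eq]; exact lt_of_le_of_lt hd1 (lt_of_lt_of_le hdq (min_le_right _ _))
  have hdt1 : |t - t₀| < δ₁ := by
    rw [← Real.dist_eq]; exact lt_of_le_of_lt hd2 (lt_of_lt_of_le hdq (min_le_left _ _))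
  have hdt2 : |t - t₀| < δ₂ := by
    rw [← Real.dist_eq]; exact lt_of_le_of_lt hd2 (lt_of_lt_of_le hdq (min_le_right _ _))
  have hu := h₁ a t hq.1 hq.2 hda1 hdt1
  have hl := h₂ a t hq.1 hq.2 hda2 hdt2
  rw [Real.dist_eq, abs_lt]
  constructor <;> simp only [] <;> [linarith; linarith]

/-- iterated cuts: `Xc v j t` is the `j`-th cut when each piece has value `t`. -/
noncomputable def Xc (v : ℝ → ℝ → ℝ) : ℕ → ℝ → ℝ
  | 0, _ => 0
  | j+1, t => Ncut v (Xc v j t) t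

include hval in
lemma Xc_mem {t : ℝ} (ht : 0 ≤ t) (j : ℕ) : Xc v j t ∈ Icc (0:ℝ) 1 := by
  induction j with
  | zero => exact ⟨le_rfl, zero_le_one⟩
  | succ j ih =>
    have h := Ncut_mem_Icc hval ih ht
    exact ⟨le_trans ih.1 h.1, h.2⟩

include hval in
lemma Xc_le_succ {t : ℝ} (ht : 0 ≤ t) (j : ℕ) : Xc v j t ≤ Xc v (j+1) t :=
  (Ncut_mem_Icc hval (Xc_mem hval ht j) ht).1

include hval in
lemma Xc_mono {t : ℝ} (ht : 0 ≤ t) : Monotone (fun j => Xc v j t) :=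
  monotone_nat_of_le_succ (Xc_le_succ hval ht)

include hval hh in
lemma Xc_cont (j : ℕ) : ContinuousOn (fun t => Xc v j t) (Ici 0) := by
  induction j with
  | zero => exact continuousOn_const
  | succ j ih =>
    have hpair : ContinuousOn (fun t => ((Xc v j t, t) : ℝ × ℝ)) (Ici 0) :=
      ih.prodMk (continuousOn_id)
    exact (Ncut_continuousOn hval hh).comp hpair
      (fun t ht => ⟨Xc_mem hval ht j, ht⟩)

include hval hh in
lemma Xc_val {t : ℝ} (ht : 0 ≤ t) (j : ℕ) :
    v (Xc v j t) (Xc v (j+1) t) = min t (v (Xc v j t) 1) :=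
  Ncut_spec hval hh (Xc_mem hval ht j) ht

include hval hh in
lemma Xc_at_zero (j : ℕ) : Xc v j 0 = 0 := by
  induction j with
  | zero => rfl
  | succ j ih =>
    show Ncut v (Xc v j 0) 0 = 0
    rw [ih]
    exact Ncut_zero hval hh ⟨le_rfl, zero_le_one⟩ le_rfl

include hval hh in
lemma Xc_at_top {t : ℝ} (ht : v 0 1 ≤ t) (ht0 : 0 ≤ t) (j : ℕ) (hj : 1 ≤ j) :
    Xc v j t = 1 := by
  induction j with
  | zero => omega
  | succ j ih =>
    rcases Nat.eq_or_lt_of_le hj with h | h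
    · show Ncut v (Xc v j t) t = 1
      have hj0 : j = 0 := by omega
      rw [hj0]
      show Ncut v 0 t = 1
      exact Ncut_eq_one hval ⟨le_rfl, zero_le_one⟩ ht0 ht
    · have h1 : Xc v j t = 1 := ih (by omega)
      show Ncut v (Xc v j t) t = 1
      rw [h1]
      refine Ncut_eq_one hval ⟨zero_le_one, le_rfl⟩ ht0 ?_
      rw [hval.2.2 1 ⟨zero_le_one, le_rfl⟩ 1 ⟨zero_le_one, le_rfl⟩ le_rfl]
      exact ht0

include hval hh in
lemma exists_equalizer (m : ℕ) : ∃ t : ℝ, 0 < t ∧ v (Xc v m t) 1 = t := by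
  have hI0 : (0:ℝ) ∈ Icc (0:ℝ) 1 := ⟨le_rfl, zero_le_one⟩
  have hI1 : (1:ℝ) ∈ Icc (0:ℝ) 1 := ⟨zero_le_one, le_rfl⟩
  have h110 : v 1 1 = 0 := hval.2.2 1 hI1 1 hI1 le_rfl
  set t₁ := v 0 1 with ht₁def
  have ht₁pos : 0 < t₁ := by
    have := hh.2 0 1 1 1 le_rfl zero_le_one le_rfl le_rfl le_rfl (by simp [Prod.ext_iff])
    rw [h110] at this; exact this
  set f : ℝ → ℝ := fun t => v (Xc v m t) 1 - t with hfdef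
  have hfc : ContinuousOn f (Icc 0 t₁) := by
    have h1 : ContinuousOn (fun t => v (Xc v m t) 1) (Ici 0) := by
      have hpair : ContinuousOn (fun t => ((Xc v m t, 1) : ℝ × ℝ)) (Ici 0) :=
        (Xc_cont hval hh m).prodMk continuousOn_const
      exact hval.1.comp hpair (fun t ht => ⟨Xc_mem hval ht m, hI1⟩)
    have h2 : Icc (0:ℝ) t₁ ⊆ Ici 0 := Icc_subset_Ici_self
    exact (h1.mono h2).sub continuousOn_id
  have hf0 : f 0 = t₁ := by
    simp only [hfdef]
    rw [Xc_at_zero hval hh m]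
    simp
    exact ht₁def.symm
  have hft₁ : f t₁ ≤ 0 := by
    rcases Nat.eq_zero_or_pos m with hm | hm
    · simp only [hfdef]
      rw [hm]
      show v 0 1 - t₁ ≤ 0
      rw [← ht₁def]
      linarith
    · simp only [hfdef]
      rw [Xc_at_top hval hh le_rfl ht₁pos.le m hm, h110]
      linarith
  have hivt := intermediate_value_Icc' ht₁pos.le hfc
  have h0mem : (0:ℝ) ∈ Icc (f t₁) (f 0) := ⟨hft₁, by rw [hf0]; exact ht₁pos.le⟩
  obtain ⟨t, htI, htf⟩ := hivt h0mem
  have htpos : 0 < t := by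
    rcases lt_or_eq_of_le htI.1 with h | h
    · exact h
    · exfalso
      rw [← h] at htf
      rw [hf0] at htf
      exact ht₁pos.ne' htf
  refine ⟨t, htpos, ?_⟩
  simp only [hfdef] at htf
  linarith

include hh in
lemma partition_lt {n : ℕ} (p q : Fin (n+1) → ℝ)
    (hp0 : p 0 = 0) (hq0 : q 0 = 0)
    (hqc : ∀ j : Fin n, q j.castSucc ≤ q j.succ)
    (hpb : ∀ j, p j ∈ Icc (0:ℝ) 1) (hqb : ∀ j, q j ∈ Icc (0:ℝ) 1)
    {tp tq : ℝ} (hpe : ∀ j : Fin n, v (p j.castSucc) (p j.succ) = tp)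
    (hqe : ∀ j : Fin n, v (q j.castSucc) (q j.succ) = tq) (hlt : tp < tq) :
    ∀ j : ℕ, ∀ hj : j + 1 ≤ n, p ⟨j+1, Nat.lt_succ_of_le hj⟩ < q ⟨j+1, Nat.lt_succ_of_le hj⟩ := by
  have step : ∀ i : Fin n, p i.castSucc ≤ q i.castSucc → p i.succ < q i.succ := by
    intro i hle
    by_contra hcon
    push_neg at hcon
    have hmono : v (q i.castSucc) (q i.succ) ≤ v (p i.castSucc) (p i.succ) :=
      hh.1 (p i.castSucc) (q i.castSucc) (q i.succ) (p i.succ)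
        (hpb _).1 hle (hqc i) hcon (hpb _).2
    rw [hpe i, hqe i] at hmono
    exact absurd hmono (not_le.mpr hlt)
  intro j
  induction j with
  | zero =>
    intro hj
    have h0 : (⟨0, hj⟩ : Fin n).castSucc = 0 := by
      ext; simp
    exact step ⟨0, hj⟩ (by rw [h0, hp0, hq0])
  | succ j ih =>
    intro hj
    have hih := ih (by omega)
    exact step ⟨j+1, hj⟩ hih.le

include hh in
lemma partition_unique {n : ℕ} (hn : 1 ≤ n) (x y : Fin (n+1) → ℝ)
    (hx : x 0 = 0 ∧ x (Fin.last n) = 1 ∧ (∀ j : Fin n, x j.castSucc ≤ x j.succ) ∧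
      ∀ j k : Fin n, v (x j.castSucc) (x j.succ) = v (x k.castSucc) (x k.succ))
    (hy : y 0 = 0 ∧ y (Fin.last n) = 1 ∧ (∀ j : Fin n, y j.castSucc ≤ y j.succ) ∧
      ∀ j k : Fin n, v (y j.castSucc) (y j.succ) = v (y k.castSucc) (y k.succ)) :
    x = y := by
  obtain ⟨hx0, hxl, hxc, hxe⟩ := hx
  obtain ⟨hy0, hyl, hyc, hye⟩ := hy
  have hxm : Monotone x := Fin.monotone_iff_le_succ.mpr hxc
  have hym : Monotone y := Fin.monotone_iff_le_succ.mpr hyc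
  have hxb : ∀ j, x j ∈ Icc (0:ℝ) 1 :=
    fun j => ⟨hx0 ▸ hxm (Fin.zero_le j), hxl ▸ hxm (Fin.le_last j)⟩
  have hyb : ∀ j, y j ∈ Icc (0:ℝ) 1 :=
    fun j => ⟨hy0 ▸ hym (Fin.zero_le j), hyl ▸ hym (Fin.le_last j)⟩
  set j0 : Fin n := ⟨0, hn⟩ with hj0def
  set tx := v (x j0.castSucc) (x j0.succ) with htxdef
  set ty := v (y j0.castSucc) (y j0.succ) with htydef
  have hxe' : ∀ j : Fin n, v (x j.castSucc) (x j.succ) = tx := fun j => hxe j j0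
  have hye' : ∀ j : Fin n, v (y j.castSucc) (y j.succ) = ty := fun j => hye j j0
  -- the common values agree
  have habs : ∀ (p q : Fin (n+1) → ℝ), p 0 = 0 → q 0 = 0 → p (Fin.last n) = 1 →
      q (Fin.last n) = 1 → (∀ j : Fin n, q j.castSucc ≤ q j.succ) →
      (∀ j, p j ∈ Icc (0:ℝ) 1) → (∀ j, q j ∈ Icc (0:ℝ) 1) →
      ∀ tp tq : ℝ, (∀ j : Fin n, v (p j.castSucc) (p j.succ) = tp) →
      (∀ j : Fin n, v (q j.castSucc) (q j.succ) = tq) → tp < tq → False := by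
    intro p q hp0 hq0 hpl hql hqc' hpb' hqb' tp tq hpe hqe hlt
    have hkey := partition_lt hh p q hp0 hq0 hqc' hpb' hqb' hpe hqe hlt (n-1) (by omega)
    have hlast : (⟨n - 1 + 1, Nat.lt_succ_of_le (by omega)⟩ : Fin (n+1)) = Fin.last n := by
      ext; simp; omega
    rw [hlast] at hkey
    rw [hpl, hql] at hkey
    exact lt_irrefl 1 hkey
  have htxty : tx = ty := by
    rcases lt_trichotomy tx ty with h | h | h
    · exact absurd (habs x y hx0 hy0 hxl hyl hyc hxb hyb tx ty hxe' hye' h) not_false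
    · exact h
    · exact absurd (habs y x hy0 hx0 hyl hxl hxc hyb hxb ty tx hye' hxe' h) not_false
  -- now the cuts agree
  have heq : ∀ j : ℕ, ∀ hj : j ≤ n, x ⟨j, Nat.lt_succ_of_le hj⟩ = y ⟨j, Nat.lt_succ_of_le hj⟩ := by
    intro j
    induction j with
    | zero =>
      intro hj
      have h0 : (⟨0, Nat.lt_succ_of_le hj⟩ : Fin (n+1)) = 0 := by ext; simp
      rw [h0, hx0, hy0]
    | succ j ih =>
      intro hj
      have hjn : j < n := by omega
      set i : Fin n := ⟨j, hjn⟩ with hidef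
      have hxy : x i.castSucc = y i.castSucc := ih (by omega)
      have hval1 : v (x i.castSucc) (x i.succ) = v (x i.castSucc) (y i.succ) := by
        rw [hxe' i, htxty, ← hye' i, hxy]
      have hyc' : x i.castSucc ≤ y i.succ := by rw [hxy]; exact hyc i
      exact right_inj hh (hxb i.castSucc).1 (hxc i) hyc' (hxb i.succ).2 (hyb i.succ).2 hval1
  funext j
  exact heq j.1 (Nat.lt_succ_iff.mp j.isLt)

end Equip

theorem existsUnique_equipartition (v : ℝ → ℝ → ℝ) (hval : IsValuation v)
    (hhungry : HungryVal v) (n : ℕ) (hn : 1 ≤ n) :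
    ∃! x : Fin (n + 1) → ℝ,
      x 0 = 0 ∧ x (Fin.last n) = 1 ∧ (∀ j : Fin n, x j.castSucc ≤ x j.succ) ∧
      ∀ j k : Fin n, v (x j.castSucc) (x j.succ) = v (x k.castSucc) (x k.succ) := by
  obtain ⟨m, rfl⟩ : ∃ m, n = m + 1 := ⟨n - 1, by omega⟩
  obtain ⟨t, htpos, hteq⟩ := exists_equalizer hval hhungry m
  have ht0 : (0:ℝ) ≤ t := htpos.le
  set x : Fin (m + 1 + 1) → ℝ := fun j => Xc v (j : ℕ) t with hxdef
  have hlast : Xc v (m+1) t = 1 := by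
    have hv := Xc_val hval hhungry ht0 m
    rw [hteq, min_self] at hv
    have hXm := Xc_mem hval ht0 m
    have hXm1 := Ncut_mem_Icc hval hXm ht0
    exact right_inj hhungry hXm.1 hXm1.1 hXm.2 hXm1.2 le_rfl (hv.trans hteq.symm)
  have hpieces : ∀ j : ℕ, j ≤ m → v (Xc v j t) (Xc v (j+1) t) = t := by
    intro j hj
    rw [Xc_val hval hhungry ht0 j]
    have hmono : v (Xc v m t) 1 ≤ v (Xc v j t) 1 :=
      hhungry.1 (Xc v j t) (Xc v m t) 1 1 (Xc_mem hval ht0 j).1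
        (Xc_mono hval ht0 hj) (Xc_mem hval ht0 m).2 le_rfl le_rfl
    rw [hteq] at hmono
    exact min_eq_left hmono
  have hxprops : x 0 = 0 ∧ x (Fin.last (m+1)) = 1 ∧
      (∀ j : Fin (m+1), x j.castSucc ≤ x j.succ) ∧
      ∀ j k : Fin (m+1), v (x j.castSucc) (x j.succ) = v (x k.castSucc) (x k.succ) := by
    refine ⟨?_, ?_, ?_, ?_⟩
    · show Xc v ((0 : Fin (m+2)) : ℕ) t = 0
      rw [Fin.val_zero]
      rfl
    · show Xc v ((Fin.last (m+1) : Fin (m+2)) : ℕ) t = 1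
      rw [Fin.val_last]
      exact hlast
    · intro j
      show Xc v (j.castSucc : ℕ) t ≤ Xc v (j.succ : ℕ) t
      rw [Fin.coe_castSucc, Fin.val_succ]
      exact Xc_le_succ hval ht0 j.1
    · intro j k
      show v (Xc v (j.castSucc : ℕ) t) (Xc v (j.succ : ℕ) t) =
        v (Xc v (k.castSucc : ℕ) t) (Xc v (k.succ : ℕ) t)
      rw [Fin.coe_castSucc, Fin.val_succ, Fin.coe_castSucc, Fin.val_succ]
      rw [hpieces j.1 (Nat.lt_succ_iff.mp j.isLt), hpieces k.1 (Nat.lt_succ_iff.mp k.isLt)]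
  exact ⟨x, hxprops, fun y hy => partition_unique hhungry hn y x hy hxprops⟩
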